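/- A reflexive digraph R ∈ 𝔗_a belongs to 𝕽 if and only if for every G ∈ 𝔗_a with h_G = h_R: 𝓢(G,R) ≠ ∅ implies 𝓜^{𝓛(G)}(G,R) ∩ 𝓢(G,R) ≠ ∅. -/

import Mathlib

/-- A finite digraph: a finite nonempty vertex set `V ⊆ ℕ` together with an
arc set `A ⊆ V × V`. -/
structure Dgraph where
  V : Finset ℕ
  nonempty : V.Nonempty
  A : Finset (ℕ × ℕ)
  A_sub : ∀ p ∈ A, p.1 ∈ V ∧ p.2 ∈ V

namespace Dgraph

/-- The set of proper arcs of `G`, i.e. the arc set of `G*`. -/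
def Astar (G : Dgraph) : Finset (ℕ × ℕ) := G.A.filter (fun p => p.1 ≠ p.2)

/-- `G` is reflexive. -/
def IsRefl (G : Dgraph) : Prop := ∀ v ∈ G.V, (v, v) ∈ G.A

/-- `p` is a path in `G` (a nonempty list of pairwise distinct vertices,
consecutive ones joined by arcs).  Its length as a path is `p.length - 1`. -/
def IsPath (G : Dgraph) (p : List ℕ) : Prop :=
  p ≠ [] ∧ p.Nodup ∧ (∀ v ∈ p, v ∈ G.V) ∧ p.Chain' (fun v w => (v, w) ∈ G.A)

/-- `p` is a path in `G*`. -/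
def IsPathStar (G : Dgraph) (p : List ℕ) : Prop :=
  p ≠ [] ∧ p.Nodup ∧ (∀ v ∈ p, v ∈ G.V) ∧ p.Chain' (fun v w => (v, w) ∈ G.A ∧ v ≠ w)

/-- `G*` contains a closed walk. -/
def HasClosedWalkStar (G : Dgraph) : Prop :=
  ∃ p : List ℕ, (∀ v ∈ p, v ∈ G.V) ∧ p.Chain' (fun v w => (v, w) ∈ G.A ∧ v ≠ w) ∧
    2 ≤ p.length ∧ p.head? = p.getLast?

/-- membership in the class `𝔗ₐ`: `G*` is acyclic. -/
def MemTa (G : Dgraph) : Prop := ¬ G.HasClosedWalkStar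

/-- The height of `G`: the maximal length of a path in `G`. -/
noncomputable def height (G : Dgraph) : ℕ :=
  sSup {n | ∃ p, G.IsPath p ∧ p.length = n + 1}

/-- The interval `[v,w]_G`. -/
def interval (G : Dgraph) (v w : ℕ) : Finset ℕ :=
  G.V.filter (fun z => (v, z) ∈ G.A ∧ (z, w) ∈ G.A)

/-- `ι(v,w)_G`, the cardinality of the interval `[v,w]_G`. -/
def iota (G : Dgraph) (v w : ℕ) : ℕ := (G.interval v w).card

/-- The set `𝓗(G,H)` of homomorphisms from `G` to `H` (represented as total
maps `ℕ → ℕ`, normalized to `0` outside of `V(G)`). -/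
def Hom (G H : Dgraph) : Set (ℕ → ℕ) :=
  {f | (∀ v ∈ G.V, f v ∈ H.V) ∧ (∀ p ∈ G.A, (f p.1, f p.2) ∈ H.A) ∧
    ∀ v, v ∉ G.V → f v = 0}

/-- The set `𝓢(G,H)` of strict homomorphisms from `G` to `H`. -/
def SHom (G H : Dgraph) : Set (ℕ → ℕ) :=
  {f ∈ Hom G H | ∀ p ∈ G.Astar, f p.1 ≠ f p.2}

/-- `μ_ξ(G)`, for a homomorphism `ξ` from `G` into `H`. -/
def mu (G H : Dgraph) (f : ℕ → ℕ) : ℕ :=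
  ∑ p ∈ G.Astar, H.iota (f p.1) (f p.2)

/-- `L` is a subgraph of `G`. -/
def Subgraph (L G : Dgraph) : Prop := L.V ⊆ G.V ∧ L.A ⊆ G.A

/-- Restriction of a map to a vertex set (normalized to `0` outside). -/
def restrict (X : Finset ℕ) (f : ℕ → ℕ) : ℕ → ℕ := fun x => if x ∈ X then f x else 0

/-- `𝓜(L,H)`: homomorphisms from `L` to `H` with maximal `μ`. -/
def MSet (L H : Dgraph) : Set (ℕ → ℕ) :=
  {f ∈ Hom L H | ∀ g ∈ Hom L H, mu L H g ≤ mu L H f}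

/-- `𝓜^𝓛(G,H)`. -/
def MLSet (G H : Dgraph) (𝓛 : Set Dgraph) : Set (ℕ → ℕ) :=
  {f ∈ Hom G H | ∀ L ∈ 𝓛, restrict L.V f ∈ MSet L H}

/-- `𝓙^𝓛_{G,H'}(ξ)` for `ξ ∈ 𝓗(G,H)`. -/
def JSet (G H H' : Dgraph) (𝓛 : Set Dgraph) (ξ : ℕ → ℕ) : Set (ℕ → ℕ) :=
  {ζ ∈ Hom G H' | ∀ L ∈ 𝓛, ∀ p ∈ L.Astar,
    H'.iota (ζ p.1) (ζ p.2) = H.iota (ξ p.1) (ξ p.2)}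

/-- The digraph `P_×` of a path `P = P_0, …, P_ℓ`: vertex set `{P_0,…,P_ℓ}`
and arcs `P_{i-1}P_i`. -/
def pathGraph (P : List ℕ) (h : P ≠ []) : Dgraph where
  V := P.toFinset
  nonempty := by
    obtain ⟨a, t, rfl⟩ := List.exists_cons_of_ne_nil h
    exact ⟨a, by simp⟩
  A := (P.zip P.tail).toFinset
  A_sub := by
    intro p hp
    rw [List.mem_toFinset] at hp
    have h1 := List.of_mem_zip hp
    exact ⟨List.mem_toFinset.mpr h1.1, List.mem_toFinset.mpr (List.mem_of_mem_tail h1.2)⟩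

/-- `𝓛(G)`: the set of the digraphs `P_×` for the paths `P` of length `h_G` in `G`. -/
def LSet (G : Dgraph) : Set Dgraph :=
  {D | ∃ (P : List ℕ) (h : P ≠ []), G.IsPath P ∧ P.length = G.height + 1 ∧
    D = pathGraph P h}

/-- The class `𝕽`: reflexive digraphs `R ∈ 𝔗ₐ` with
`𝓜^{𝓛(R)}(R,R) ∩ 𝓢(R,R) ≠ ∅`. -/
def MemR (R : Dgraph) : Prop :=
  R.MemTa ∧ R.IsRefl ∧ (MLSet R R (LSet R) ∩ SHom R R).Nonempty

/-- `G` is a poset: reflexive, antisymmetric and transitive. -/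
def IsPoset (G : Dgraph) : Prop :=
  G.IsRefl ∧ (∀ v w, (v, w) ∈ G.A → (w, v) ∈ G.A → v = w) ∧
    (∀ u v w, (u, v) ∈ G.A → (v, w) ∈ G.A → (u, w) ∈ G.A)

/-- The class `𝔗ₐ^{=n}`: digraphs in `𝔗ₐ` of height `n` in which every vertex
lies on a path of length `n`. -/
def MemTaEq (n : ℕ) (G : Dgraph) : Prop :=
  G.MemTa ∧ G.height = n ∧ ∀ v ∈ G.V, ∃ p, G.IsPath p ∧ p.length = n + 1 ∧ v ∈ p

/-- A maximal path in `G`: no path in `G` properly contains its vertex set. -/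
def MaximalPath (G : Dgraph) (P : List ℕ) : Prop :=
  G.IsPath P ∧ ∀ Q, G.IsPath Q → (∀ v ∈ P, v ∈ Q) → ∀ v ∈ Q, v ∈ P

end Dgraph

namespace Dgraph

section Aux

open List

lemma zip_tail_getElem {l : List ℕ} {i : ℕ} (h : i < (l.zip l.tail).length) :
    (l.zip l.tail)[i] = (l[i]'(by simp at h; omega), l[i+1]'(by simp at h; omega)) := by
  have h2 : i < l.tail.length := by simp at h ⊢; omega
  rw [List.getElem_zip, List.getElem_tail]

lemma pair_rel_of_mem_zip {l : List ℕ} {r : ℕ → ℕ → Prop} (h : l.Chain' r) {p : ℕ × ℕ}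
    (hp : p ∈ l.zip l.tail) : r p.1 p.2 := by
  obtain ⟨i, hi, he⟩ := List.getElem_of_mem hp
  rw [zip_tail_getElem hi] at he
  have hlen : i + 1 < l.length := by simp at hi; omega
  have hr := List.isChain_iff_getElem.mp h i (by omega)
  rw [← he]
  exact hr

lemma nodup_zip_tail {l : List ℕ} (h : l.Nodup) : (l.zip l.tail).Nodup := by
  rw [List.Nodup, List.pairwise_iff_getElem]
  intro i j hi hj hij heq
  rw [zip_tail_getElem hi, zip_tail_getElem hj, Prod.mk.injEq] at heq
  have : i = j := (List.Nodup.getElem_inj_iff h).mp heq.1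
  omega

lemma chain'_star_of_path {G : Dgraph} {P : List ℕ} (hP : G.IsPath P) :
    P.Chain' (fun a b => (a, b) ∈ G.A ∧ a ≠ b) := by
  obtain ⟨-, hnd, -, hch⟩ := hP
  change List.IsChain _ _ at hch ⊢
  rw [List.isChain_iff_getElem] at hch ⊢
  intro i hi
  refine ⟨hch i hi, ?_⟩
  intro he
  have : i = i + 1 := (List.Nodup.getElem_inj_iff hnd).mp he
  omega

lemma nodup_of_chain'_star (R : Dgraph) (hRt : R.MemTa) :
    ∀ Q : List ℕ, (∀ v ∈ Q, v ∈ R.V) →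
      Q.Chain' (fun v w => (v, w) ∈ R.A ∧ v ≠ w) → Q.Nodup := by
  intro Q
  induction Q with
  | nil => simp
  | cons v t ih =>
    intro hV hc
    have ht := ih (fun x hx => hV x (List.mem_cons_of_mem _ hx)) hc.tail
    refine List.nodup_cons.mpr ⟨?_, ht⟩
    intro hv
    obtain ⟨s₁, s₂, rfl⟩ := List.append_of_mem hv
    apply hRt
    refine ⟨v :: s₁ ++ [v], ?_, ?_, ?_, ?_⟩
    · intro x hx
      apply hV
      simp at hx ⊢
      tauto
    · have he : v :: (s₁ ++ v :: s₂) = (v :: s₁ ++ [v]) ++ s₂ := by simp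
      rw [he] at hc
      exact (List.isChain_append.mp hc).1
    · simp
    · rw [List.getLast?_concat]
      simp

lemma astar_pathGraph {P : List ℕ} (hne : P ≠ []) (hnd : P.Nodup) :
    (pathGraph P hne).Astar = (P.zip P.tail).toFinset := by
  apply Finset.filter_eq_self.mpr
  intro p hp
  replace hp : p ∈ P.zip P.tail := by simpa [pathGraph] using hp
  obtain ⟨i, hi, he⟩ := List.getElem_of_mem hp
  rw [zip_tail_getElem hi] at he
  intro heq
  rw [← he] at heq
  have : i = i + 1 := (List.Nodup.getElem_inj_iff hnd).mp heq
  omega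

lemma mu_pathGraph {P : List ℕ} (hne : P ≠ []) (hnd : P.Nodup) (H : Dgraph) (g : ℕ → ℕ) :
    mu (pathGraph P hne) H g
      = ((P.zip P.tail).map (fun p => H.iota (g p.1) (g p.2))).sum := by
  rw [mu, astar_pathGraph hne hnd, List.sum_toFinset _ (nodup_zip_tail hnd)]

lemma zip_map_tail (P : List ℕ) (σ : ℕ → ℕ) :
    (P.map σ).zip (P.map σ).tail = (P.zip P.tail).map (Prod.map σ σ) := by
  rw [← List.map_tail, ← List.zip_map]

lemma mu_pathGraph_map {P : List ℕ} (hne : P ≠ []) (hnd : P.Nodup) (σ : ℕ → ℕ)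
    (hne' : P.map σ ≠ []) (hnd' : (P.map σ).Nodup) (H : Dgraph) (u w : ℕ → ℕ)
    (hw : ∀ a ∈ P, w (σ a) = u a) :
    mu (pathGraph (P.map σ) hne') H w = mu (pathGraph P hne) H u := by
  rw [mu_pathGraph _ hnd', mu_pathGraph _ hnd, zip_map_tail, List.map_map]
  apply congrArg
  apply List.map_congr_left
  intro p hp
  have h1 : p.1 ∈ P := (List.of_mem_zip hp).1
  have h2 : p.2 ∈ P := List.mem_of_mem_tail (List.of_mem_zip hp).2
  simp [Function.comp, Prod.map, hw p.1 h1, hw p.2 h2]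

end Aux

end Dgraph

open Dgraph

theorem stmt_10 (R : Dgraph) (hRr : R.IsRefl) (hRt : R.MemTa) :
    MemR R ↔ ∀ G : Dgraph, G.MemTa → G.height = R.height →
      (SHom G R).Nonempty → (MLSet G R (LSet G) ∩ SHom G R).Nonempty := by
  classical
  constructor
  · rintro ⟨-, -, ξ, ⟨⟨hξ1, hξ2, hξ3⟩, hξL⟩, ⟨-, hξS⟩⟩ G hGt hh ⟨σ, ⟨hσ1, hσ2, hσ3⟩, hσS⟩
    set f : ℕ → ℕ := fun v => if v ∈ G.V then ξ (σ v) else 0 with hfdef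
    have hfval : ∀ v ∈ G.V, f v = ξ (σ v) := by
      intro v hv; simp [hfdef, hv]
    have hstrict : ∀ v w : ℕ, (v, w) ∈ G.A → v ≠ w → ξ (σ v) ≠ ξ (σ w) := by
      intro v w hvw hne
      have hmem : (v, w) ∈ G.Astar := by simp [Astar, hvw, hne]
      have hσne : σ v ≠ σ w := hσS (v, w) hmem
      have hR : (σ v, σ w) ∈ R.Astar := by
        simp only [Astar, Finset.mem_filter]
        exact ⟨hσ2 (v, w) hvw, hσne⟩
      exact hξS (σ v, σ w) hR
    have fHom : f ∈ Hom G R := by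
      refine ⟨?_, ?_, ?_⟩
      · intro v hv
        rw [hfval v hv]
        exact hξ1 _ (hσ1 v hv)
      · intro p hp
        obtain ⟨h1, h2⟩ := G.A_sub p hp
        rw [hfval _ h1, hfval _ h2]
        exact hξ2 (σ p.1, σ p.2) (hσ2 p hp)
      · intro v hv; simp [hfdef, hv]
    refine ⟨f, ⟨fHom, ?_⟩, fHom, ?_⟩
    · -- MLSet condition
      rintro L ⟨P, hPne, hPpath, hPlen, rfl⟩
      have hPnd : P.Nodup := hPpath.2.1
      have hPV : ∀ v ∈ P, v ∈ G.V := hPpath.2.2.1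
      have hPstar := chain'_star_of_path hPpath
      have hQstar : (P.map σ).Chain' (fun v w => (v, w) ∈ R.A ∧ v ≠ w) := by
        change List.IsChain _ _
        rw [List.isChain_map]
        refine hPstar.imp ?_
        rintro a b ⟨ha, hne⟩
        exact ⟨hσ2 (a, b) ha, hσS (a, b) (by simp [Astar, ha, hne])⟩
      have hQV : ∀ v ∈ P.map σ, v ∈ R.V := by
        intro v hv
        obtain ⟨a, ha, rfl⟩ := List.mem_map.mp hv
        exact hσ1 a (hPV a ha)
      have hQnd : (P.map σ).Nodup := nodup_of_chain'_star R hRt _ hQV hQstar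
      have hQne : P.map σ ≠ [] := by
        simp only [ne_eq, List.map_eq_nil_iff]
        exact hPne
      have hQpath : R.IsPath (P.map σ) :=
        ⟨hQne, hQnd, hQV, hQstar.imp (fun a b h => h.1)⟩
      have hQlen : (P.map σ).length = R.height + 1 := by
        rw [List.length_map, hPlen, hh]
      have hLQ : pathGraph (P.map σ) hQne ∈ LSet R := ⟨P.map σ, hQne, hQpath, hQlen, rfl⟩
      obtain ⟨hξQHom, hξQmax⟩ := hξL _ hLQ
      have hinj := List.inj_on_of_nodup_map hQnd
      -- the restricted map is a homomorphism of the path graph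
      have homP : restrict (pathGraph P hPne).V f ∈ Hom (pathGraph P hPne) R := by
        refine ⟨?_, ?_, ?_⟩
        · intro v hv
          have hvP : v ∈ P := by simpa [pathGraph] using hv
          rw [restrict, if_pos hv, hfval v (hPV v hvP)]
          exact hξ1 _ (hσ1 v (hPV v hvP))
        · intro p hp
          have hpz : p ∈ P.zip P.tail := by simpa [pathGraph] using hp
          have h1 : p.1 ∈ P := (List.of_mem_zip hpz).1
          have h2 : p.2 ∈ P := List.mem_of_mem_tail (List.of_mem_zip hpz).2
          have harc : (p.1, p.2) ∈ G.A := pair_rel_of_mem_zip hPpath.2.2.2 hpz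
          have e1 : restrict (pathGraph P hPne).V f p.1 = ξ (σ p.1) := by
            rw [restrict, if_pos (by simpa [pathGraph] using h1), hfval _ (hPV _ h1)]
          have e2 : restrict (pathGraph P hPne).V f p.2 = ξ (σ p.2) := by
            rw [restrict, if_pos (by simpa [pathGraph] using h2), hfval _ (hPV _ h2)]
          rw [e1, e2]
          exact hξ2 (σ p.1, σ p.2) (hσ2 (p.1, p.2) harc)
        · intro v hv; rw [restrict, if_neg hv]
      refine ⟨homP, ?_⟩
      intro g hg
      obtain ⟨hg1, hg2, hg3⟩ := hg
      -- transport g to a homomorphism on the image path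
      set g' : ℕ → ℕ :=
        fun q => if q ∈ P.map σ then g ((P.filter (fun a => σ a = q)).head!) else 0
        with hg'def
      have hg'eval : ∀ a ∈ P, g' (σ a) = g a := by
        intro a ha
        have hmem : σ a ∈ P.map σ := List.mem_map_of_mem ha
        have hfne : (P.filter (fun b => σ b = σ a)) ≠ [] := by
          apply List.ne_nil_of_mem (a := a); simp [ha]
        have hhm := List.head!_mem_self hfne
        rw [List.mem_filter] at hhm
        have heq : (P.filter (fun b => σ b = σ a)).head! = a := by
          apply hinj hhm.1 ha
          simpa using hhm.2
        simp only [hg'def, if_pos hmem, heq]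
      have hg'Hom : g' ∈ Hom (pathGraph (P.map σ) hQne) R := by
        refine ⟨?_, ?_, ?_⟩
        · intro q hq
          have hqm : q ∈ P.map σ := by simpa [pathGraph] using hq
          obtain ⟨a, ha, rfl⟩ := List.mem_map.mp hqm
          rw [hg'eval a ha]
          exact hg1 a (by simpa [pathGraph] using ha)
        · intro p hp
          have hpz : p ∈ (P.map σ).zip (P.map σ).tail := by simpa [pathGraph] using hp
          rw [zip_map_tail] at hpz
          obtain ⟨q, hq, rfl⟩ := List.mem_map.mp hpz
          have h1 : q.1 ∈ P := (List.of_mem_zip hq).1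
          have h2 : q.2 ∈ P := List.mem_of_mem_tail (List.of_mem_zip hq).2
          have e1 : (Prod.map σ σ q).1 = σ q.1 := rfl
          have e2 : (Prod.map σ σ q).2 = σ q.2 := rfl
          rw [e1, e2, hg'eval q.1 h1, hg'eval q.2 h2]
          exact hg2 (q.1, q.2) (by simpa [pathGraph] using hq)
        · intro q hq
          have hqn : q ∉ P.map σ := by simpa [pathGraph] using hq
          simp only [hg'def]
          rw [if_neg hqn]
      have hmu1 : mu (pathGraph P hPne) R g
          = mu (pathGraph (P.map σ) hQne) R g' :=
        (mu_pathGraph_map hPne hPnd σ hQne hQnd R g g' hg'eval).symm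
      have hmu2 : mu (pathGraph (P.map σ) hQne) R (restrict (pathGraph (P.map σ) hQne).V ξ)
          = mu (pathGraph P hPne) R (restrict (pathGraph P hPne).V f) := by
        apply mu_pathGraph_map hPne hPnd σ hQne hQnd R
        intro a ha
        have hmem : σ a ∈ P.map σ := List.mem_map_of_mem ha
        have e1 : restrict (pathGraph (P.map σ) hQne).V ξ (σ a) = ξ (σ a) := by
          rw [restrict, if_pos (by simpa [pathGraph] using hmem)]
        have e2 : restrict (pathGraph P hPne).V f a = ξ (σ a) := by
          rw [restrict, if_pos (by simpa [pathGraph] using ha), hfval a (hPV a ha)]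
        rw [e1, e2]
      calc mu (pathGraph P hPne) R g
          = mu (pathGraph (P.map σ) hQne) R g' := hmu1
        _ ≤ mu (pathGraph (P.map σ) hQne) R (restrict (pathGraph (P.map σ) hQne).V ξ) :=
            hξQmax g' hg'Hom
        _ = mu (pathGraph P hPne) R (restrict (pathGraph P hPne).V f) := hmu2
    · -- strictness
      intro p hp
      rw [Astar, Finset.mem_filter] at hp
      obtain ⟨h1, h2⟩ := G.A_sub p hp.1
      rw [hfval _ h1, hfval _ h2]
      exact hstrict p.1 p.2 hp.1 hp.2
  · intro h
    refine ⟨hRt, hRr, ?_⟩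
    apply h R hRt rfl
    refine ⟨restrict R.V id, ⟨?_, ?_, ?_⟩, ?_⟩
    · intro v hv; simp [restrict, hv]
    · intro p hp
      obtain ⟨h1, h2⟩ := R.A_sub p hp
      simpa [restrict, h1, h2] using hp
    · intro v hv; simp [restrict, hv]
    · intro p hp
      rw [Astar, Finset.mem_filter] at hp
      obtain ⟨h1, h2⟩ := R.A_sub p hp.1
      simpa [restrict, h1, h2] using hp.2
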